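/- Let q > 0 and x ∈ [0, log 2]. Let y, y' ∈ (0,1) satisfy y ≥ q and y' ≥ exp(x)·y. Then the Kullback–Leibler divergence between the Bernoulli distributions with means y and y' satisfies KL(Ber(y)‖Ber(y')) = y·log(y/y') + (1−y)·log((1−y)/(1−y')) ≥ q·x²/4. -/

import Mathlib

/-- For `q > 0`, `x ∈ [0, log 2]`, `y, y' ∈ (0,1)` with `y ≥ q` and `y' ≥ exp(x)·y`,
the KL divergence between Bernoulli(y) and Bernoulli(y') is at least `q·x²/4`. -/
theorem bernoulli_kl_lower_bound (q x y y' : ℝ)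
    (hq : 0 < q) (hx0 : 0 ≤ x) (hx1 : x ≤ Real.log 2)
    (hy0 : 0 < y) (hy1 : y < 1) (hy'0 : 0 < y') (hy'1 : y' < 1)
    (hyq : q ≤ y) (hyy' : Real.exp x * y ≤ y') :
    q * x ^ 2 / 4 ≤ y * Real.log (y / y') + (1 - y) * Real.log ((1 - y) / (1 - y')) := by
  have hex1 : (1:ℝ) ≤ Real.exp x := Real.one_le_exp hx0
  have hye : 0 < y * Real.exp x := by positivity
  have h1y : (0:ℝ) < 1 - y := by linarith
  have h1y' : (0:ℝ) < 1 - y' := by linarith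
  set A := Real.log y' - Real.log y with hA
  have hlogdiv1 : Real.log (y / y') = Real.log y - Real.log y' :=
    Real.log_div hy0.ne' hy'0.ne'
  have hlogdiv2 : Real.log ((1-y)/(1-y')) = Real.log (1-y) - Real.log (1-y') :=
    Real.log_div h1y.ne' h1y'.ne'
  -- F1 : second term lower bound
  have hlog1 : Real.log ((1-y')/(1-y)) ≤ (1-y')/(1-y) - 1 :=
    Real.log_le_sub_one_of_pos (by positivity)
  have hF1 : y' - y ≤ (1-y) * (Real.log (1-y) - Real.log (1-y')) := by
    rw [Real.log_div h1y'.ne' h1y.ne'] at hlog1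
    have h2 : (1-y) * (Real.log (1-y') - Real.log (1-y)) ≤ (1-y) * ((1-y')/(1-y) - 1) :=
      mul_le_mul_of_nonneg_left hlog1 h1y.le
    have h3 : (1-y) * ((1-y')/(1-y) - 1) = y - y' := by field_simp; ring
    nlinarith [h2]
  have hAx : x ≤ A := by
    have h := Real.log_le_log (by positivity) hyy'
    rw [Real.log_mul (Real.exp_pos x).ne' hy0.ne', Real.log_exp] at h
    simp only [hA]; linarith
  have hF2 : y * Real.exp x * (A - x) ≤ y' - y * Real.exp x := by
    have hlog2 : Real.log (y' / (y * Real.exp x)) ≤ y' / (y * Real.exp x) - 1 :=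
      Real.log_le_sub_one_of_pos (by positivity)
    have heq : Real.log (y' / (y * Real.exp x)) = A - x := by
      rw [Real.log_div hy'0.ne' hye.ne', Real.log_mul hy0.ne' (Real.exp_pos x).ne',
        Real.log_exp]
      ring
    rw [heq] at hlog2
    have h := mul_le_mul_of_nonneg_left hlog2 hye.le
    calc y * Real.exp x * (A - x) ≤ y * Real.exp x * (y' / (y * Real.exp x) - 1) := h
      _ = y' - y * Real.exp x := by field_simp
  have hF2' : y * (A - x) ≤ y' - y * Real.exp x := by
    nlinarith [sub_nonneg.2 hAx, hy0.le, hex1]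
  have hF3 : 1 + x + x^2/4 ≤ Real.exp x := by
    have h := Real.add_one_le_exp (x/2)
    have hp := (Real.exp_pos (x/2)).le
    have he : Real.exp (x/2) * Real.exp (x/2) = Real.exp x := by
      rw [← Real.exp_add]; ring_nf
    nlinarith [h, hp]
  rw [hlogdiv1, hlogdiv2]
  have key : y * (Real.log y - Real.log y') = -(y * A) := by simp only [hA]; ring
  nlinarith [hF1, hF2', mul_nonneg (sub_nonneg.2 hyq) (by nlinarith : (0:ℝ) ≤ Real.exp x - 1 - x),
    mul_nonneg hq.le (by nlinarith : (0:ℝ) ≤ Real.exp x - 1 - x - x^2/4)]
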